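/- Each of the three maps Z₁(x,y) = ((1−x²−y²)/(x²+(y+1)²), 2x/(x²+(y+1)²)), Z₂(x,y) = ((2x²−2(y+1)²)/(x²+(y+1)²)², −4x(y+1)/(x²+(y+1)²)²), Z₃(x,y) = (2x(x²+y²−1)/(x²+(y+1)²)², −(2y(y+1)²+2x²(2+y))/(x²+(y+1)²)²) is harmonic on the open upper half-plane ℝ²₊ = ℝ×(0,∞): ΔZ_i = 0 on ℝ²₊ for i = 1, 2, 3. -/

import Mathlib

noncomputable section

/-- Harmonic extension of the first kernel element. -/
def Z1 (x y : ℝ) : ℝ × ℝ :=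
  ((1 - x ^ 2 - y ^ 2) / (x ^ 2 + (y + 1) ^ 2), 2 * x / (x ^ 2 + (y + 1) ^ 2))

/-- Harmonic extension of the second kernel element. -/
def Z2 (x y : ℝ) : ℝ × ℝ :=
  ((2 * x ^ 2 - 2 * (y + 1) ^ 2) / (x ^ 2 + (y + 1) ^ 2) ^ 2,
    -(4 * x * (y + 1)) / (x ^ 2 + (y + 1) ^ 2) ^ 2)

/-- Harmonic extension of the third kernel element. -/
def Z3 (x y : ℝ) : ℝ × ℝ :=
  (2 * x * (x ^ 2 + y ^ 2 - 1) / (x ^ 2 + (y + 1) ^ 2) ^ 2,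
    -(2 * y * (y + 1) ^ 2 + 2 * x ^ 2 * (2 + y)) / (x ^ 2 + (y + 1) ^ 2) ^ 2)

/-- The Laplacian of a map `f : ℝ → ℝ → ℝ × ℝ` in the variables `(x, y)`. -/
def lap (f : ℝ → ℝ → ℝ × ℝ) (x y : ℝ) : ℝ × ℝ :=
  deriv (fun x' => deriv (fun x'' => f x'' y) x') x +
    deriv (fun y' => deriv (fun y'' => f x y'') y') y

lemma hasDerivAt_div_pow {N Q : ℝ → ℝ} {n q t : ℝ} (k : ℕ) (hk : 1 ≤ k)
    (hN : HasDerivAt N n t) (hQ : HasDerivAt Q q t) (h0 : Q t ≠ 0) :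
    HasDerivAt (fun s => N s / Q s ^ k)
      ((n * Q t - (k : ℝ) * N t * q) / Q t ^ (k + 1)) t := by
  obtain ⟨m, rfl⟩ := Nat.exists_eq_succ_of_ne_zero (by omega : k ≠ 0)
  have h := hN.div (hQ.pow (m + 1)) (pow_ne_zero _ h0)
  refine (h : HasDerivAt (fun s => N s / Q s ^ (m + 1)) _ t).congr_deriv ?_
  simp only [Pi.pow_apply, Nat.succ_eq_add_one, Nat.add_sub_cancel]
  field_simp
  ring


lemma hasDerivAt_poly3 (a b c d t : ℝ) :
    HasDerivAt (fun s : ℝ => a + b * s + c * s ^ 2 + d * s ^ 3)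
      (b + 2 * c * t + 3 * d * t ^ 2) t := by
  have h1 : HasDerivAt (fun s : ℝ => s) 1 t := hasDerivAt_id t
  have h2 := hasDerivAt_pow 2 t
  have h3 := hasDerivAt_pow 3 t
  have h := (((h1.const_mul b).const_add a).add (h2.const_mul c)).add (h3.const_mul d)
  refine (h : HasDerivAt (fun s : ℝ => a + b * s + c * s ^ 2 + d * s ^ 3) _ t).congr_deriv ?_
  push_cast
  ring

lemma hasDerivAt_of_poly3 {f : ℝ → ℝ} (a b c d : ℝ) {v t : ℝ}
    (hf : ∀ s, f s = a + b * s + c * s ^ 2 + d * s ^ 3)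
    (hv : v = b + 2 * c * t + 3 * d * t ^ 2) :
    HasDerivAt f v t := by
  rw [hv]
  exact (hasDerivAt_poly3 a b c d t).congr_of_eventuallyEq
    (Filter.Eventually.of_forall fun s => hf s)


lemma lap_div_pow (k : ℕ) (hk : 1 ≤ k)
    (M Mx Mxx My Myy N Nx Nxx Ny Nyy : ℝ → ℝ → ℝ)
    (hMx : ∀ p q : ℝ, HasDerivAt (fun s => M s q) (Mx p q) p)
    (hMxx : ∀ p q : ℝ, HasDerivAt (fun s => Mx s q) (Mxx p q) p)
    (hMy : ∀ p q : ℝ, HasDerivAt (fun s => M p s) (My p q) q)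
    (hMyy : ∀ p q : ℝ, HasDerivAt (fun s => My p s) (Myy p q) q)
    (hNx : ∀ p q : ℝ, HasDerivAt (fun s => N s q) (Nx p q) p)
    (hNxx : ∀ p q : ℝ, HasDerivAt (fun s => Nx s q) (Nxx p q) p)
    (hNy : ∀ p q : ℝ, HasDerivAt (fun s => N p s) (Ny p q) q)
    (hNyy : ∀ p q : ℝ, HasDerivAt (fun s => Ny p s) (Nyy p q) q)
    (x y : ℝ) (hy : 0 < y) :
    lap (fun a b => (M a b / (a ^ 2 + (b + 1) ^ 2) ^ k,
                     N a b / (a ^ 2 + (b + 1) ^ 2) ^ k)) x y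
      = ((((Mxx x y + Myy x y) * (x ^ 2 + (y + 1) ^ 2)
            - 4 * (k : ℝ) * x * Mx x y - 4 * (k : ℝ) * (y + 1) * My x y
            + 4 * (k : ℝ) ^ 2 * M x y)
            * (x ^ 2 + (y + 1) ^ 2)) / (x ^ 2 + (y + 1) ^ 2) ^ (k + 2),
         (((Nxx x y + Nyy x y) * (x ^ 2 + (y + 1) ^ 2)
            - 4 * (k : ℝ) * x * Nx x y - 4 * (k : ℝ) * (y + 1) * Ny x y
            + 4 * (k : ℝ) ^ 2 * N x y)
            * (x ^ 2 + (y + 1) ^ 2)) / (x ^ 2 + (y + 1) ^ 2) ^ (k + 2)) := by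
  have hy1 : (0 : ℝ) < y + 1 := by linarith
  have h0 : ∀ a : ℝ, a ^ 2 + (y + 1) ^ 2 ≠ 0 := fun a =>
    ne_of_gt (by nlinarith [sq_nonneg a])
  have hQx : ∀ a b : ℝ, HasDerivAt (fun s : ℝ => s ^ 2 + (b + 1) ^ 2) (2 * a) a := by
    intro a b
    simpa using (hasDerivAt_pow 2 a).add_const ((b + 1) ^ 2)
  have hQy : ∀ a b : ℝ, HasDerivAt (fun s : ℝ => a ^ 2 + (s + 1) ^ 2) (2 * (b + 1)) b := by
    intro a b
    have h := (((hasDerivAt_id b).add_const 1).pow 2).const_add (a ^ 2)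
    simpa using h
  -- x direction
  have hMdx : ∀ s : ℝ, HasDerivAt (fun u => M u y / (u ^ 2 + (y + 1) ^ 2) ^ k)
      ((Mx s y * (s ^ 2 + (y + 1) ^ 2) - (k : ℝ) * M s y * (2 * s))
        / (s ^ 2 + (y + 1) ^ 2) ^ (k + 1)) s :=
    fun s => hasDerivAt_div_pow k hk (hMx s y) (hQx s y) (h0 s)
  have hNdx : ∀ s : ℝ, HasDerivAt (fun u => N u y / (u ^ 2 + (y + 1) ^ 2) ^ k)
      ((Nx s y * (s ^ 2 + (y + 1) ^ 2) - (k : ℝ) * N s y * (2 * s))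
        / (s ^ 2 + (y + 1) ^ 2) ^ (k + 1)) s :=
    fun s => hasDerivAt_div_pow k hk (hNx s y) (hQx s y) (h0 s)
  have hdx : deriv (fun x'' => ((M x'' y / (x'' ^ 2 + (y + 1) ^ 2) ^ k,
        N x'' y / (x'' ^ 2 + (y + 1) ^ 2) ^ k) : ℝ × ℝ))
      = fun s => ((Mx s y * (s ^ 2 + (y + 1) ^ 2) - (k : ℝ) * M s y * (2 * s))
            / (s ^ 2 + (y + 1) ^ 2) ^ (k + 1),
          (Nx s y * (s ^ 2 + (y + 1) ^ 2) - (k : ℝ) * N s y * (2 * s))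
            / (s ^ 2 + (y + 1) ^ 2) ^ (k + 1)) :=
    funext fun s => ((hMdx s).prodMk (hNdx s)).deriv
  have hAM : HasDerivAt
      (fun s => Mx s y * (s ^ 2 + (y + 1) ^ 2) - (k : ℝ) * M s y * (2 * s))
      (Mxx x y * (x ^ 2 + (y + 1) ^ 2) + Mx x y * (2 * x)
        - (k : ℝ) * (Mx x y * (2 * x) + M x y * 2)) x := by
    have h1 := (hMxx x y).mul (hQx x y)
    have hb : HasDerivAt (fun s : ℝ => M s y * (2 * s)) (Mx x y * (2 * x) + M x y * 2) x := by
      have h := (hMx x y).mul ((hasDerivAt_id x).const_mul 2)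
      exact (h : HasDerivAt (fun s : ℝ => M s y * (2 * s)) _ x).congr_deriv (by simp only [id]; ring)
    have h2 : HasDerivAt (fun s : ℝ => (k : ℝ) * M s y * (2 * s))
        ((k : ℝ) * (Mx x y * (2 * x) + M x y * 2)) x :=
      (hb.const_mul (k : ℝ)).congr_of_eventuallyEq
        (Filter.Eventually.of_forall fun s => by ring)
    exact h1.sub h2
  have hAN : HasDerivAt
      (fun s => Nx s y * (s ^ 2 + (y + 1) ^ 2) - (k : ℝ) * N s y * (2 * s))
      (Nxx x y * (x ^ 2 + (y + 1) ^ 2) + Nx x y * (2 * x)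
        - (k : ℝ) * (Nx x y * (2 * x) + N x y * 2)) x := by
    have h1 := (hNxx x y).mul (hQx x y)
    have hb : HasDerivAt (fun s : ℝ => N s y * (2 * s)) (Nx x y * (2 * x) + N x y * 2) x := by
      have h := (hNx x y).mul ((hasDerivAt_id x).const_mul 2)
      exact (h : HasDerivAt (fun s : ℝ => N s y * (2 * s)) _ x).congr_deriv (by simp only [id]; ring)
    have h2 : HasDerivAt (fun s : ℝ => (k : ℝ) * N s y * (2 * s))
        ((k : ℝ) * (Nx x y * (2 * x) + N x y * 2)) x :=
      (hb.const_mul (k : ℝ)).congr_of_eventuallyEq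
        (Filter.Eventually.of_forall fun s => by ring)
    exact h1.sub h2
  have hx2 : deriv (fun x' => deriv (fun x'' => ((M x'' y / (x'' ^ 2 + (y + 1) ^ 2) ^ k,
        N x'' y / (x'' ^ 2 + (y + 1) ^ 2) ^ k) : ℝ × ℝ)) x') x
      = (((Mxx x y * (x ^ 2 + (y + 1) ^ 2) + Mx x y * (2 * x)
            - (k : ℝ) * (Mx x y * (2 * x) + M x y * 2)) * (x ^ 2 + (y + 1) ^ 2)
            - ((k + 1 : ℕ) : ℝ) * (Mx x y * (x ^ 2 + (y + 1) ^ 2)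
              - (k : ℝ) * M x y * (2 * x)) * (2 * x)) / (x ^ 2 + (y + 1) ^ 2) ^ (k + 2),
         ((Nxx x y * (x ^ 2 + (y + 1) ^ 2) + Nx x y * (2 * x)
            - (k : ℝ) * (Nx x y * (2 * x) + N x y * 2)) * (x ^ 2 + (y + 1) ^ 2)
            - ((k + 1 : ℕ) : ℝ) * (Nx x y * (x ^ 2 + (y + 1) ^ 2)
              - (k : ℝ) * N x y * (2 * x)) * (2 * x)) / (x ^ 2 + (y + 1) ^ 2) ^ (k + 2)) := by
    simp only [hdx]
    exact ((hasDerivAt_div_pow (k + 1) (Nat.le_add_left 1 k) hAM (hQx x y) (h0 x)).prodMk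
      (hasDerivAt_div_pow (k + 1) (Nat.le_add_left 1 k) hAN (hQx x y) (h0 x))).deriv
  -- y direction
  have h0y : ∀ s : ℝ, -1 < s → x ^ 2 + (s + 1) ^ 2 ≠ 0 := fun s hs =>
    ne_of_gt (by nlinarith [sq_nonneg x])
  have hMdy : ∀ s : ℝ, -1 < s → HasDerivAt (fun u => M x u / (x ^ 2 + (u + 1) ^ 2) ^ k)
      ((My x s * (x ^ 2 + (s + 1) ^ 2) - (k : ℝ) * M x s * (2 * (s + 1)))
        / (x ^ 2 + (s + 1) ^ 2) ^ (k + 1)) s :=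
    fun s hs => hasDerivAt_div_pow k hk (hMy x s) (hQy x s) (h0y s hs)
  have hNdy : ∀ s : ℝ, -1 < s → HasDerivAt (fun u => N x u / (x ^ 2 + (u + 1) ^ 2) ^ k)
      ((Ny x s * (x ^ 2 + (s + 1) ^ 2) - (k : ℝ) * N x s * (2 * (s + 1)))
        / (x ^ 2 + (s + 1) ^ 2) ^ (k + 1)) s :=
    fun s hs => hasDerivAt_div_pow k hk (hNy x s) (hQy x s) (h0y s hs)
  have hevy : (fun y' => deriv (fun y'' => ((M x y'' / (x ^ 2 + (y'' + 1) ^ 2) ^ k,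
        N x y'' / (x ^ 2 + (y'' + 1) ^ 2) ^ k) : ℝ × ℝ)) y')
      =ᶠ[nhds y] fun s => ((My x s * (x ^ 2 + (s + 1) ^ 2)
            - (k : ℝ) * M x s * (2 * (s + 1))) / (x ^ 2 + (s + 1) ^ 2) ^ (k + 1),
          (Ny x s * (x ^ 2 + (s + 1) ^ 2)
            - (k : ℝ) * N x s * (2 * (s + 1))) / (x ^ 2 + (s + 1) ^ 2) ^ (k + 1)) := by
    filter_upwards [Ioi_mem_nhds (show (-1 : ℝ) < y by linarith)] with s hs
    exact ((hMdy s hs).prodMk (hNdy s hs)).deriv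
  have hBM : HasDerivAt
      (fun s => My x s * (x ^ 2 + (s + 1) ^ 2) - (k : ℝ) * M x s * (2 * (s + 1)))
      (Myy x y * (x ^ 2 + (y + 1) ^ 2) + My x y * (2 * (y + 1))
        - (k : ℝ) * (My x y * (2 * (y + 1)) + M x y * 2)) y := by
    have h1 := (hMyy x y).mul (hQy x y)
    have hb : HasDerivAt (fun s : ℝ => M x s * (2 * (s + 1)))
        (My x y * (2 * (y + 1)) + M x y * 2) y := by
      have h := (hMy x y).mul (((hasDerivAt_id y).add_const 1).const_mul 2)
      exact (h : HasDerivAt (fun s : ℝ => M x s * (2 * (s + 1))) _ y).congr_deriv (by simp)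
    have h2 : HasDerivAt (fun s : ℝ => (k : ℝ) * M x s * (2 * (s + 1)))
        ((k : ℝ) * (My x y * (2 * (y + 1)) + M x y * 2)) y :=
      (hb.const_mul (k : ℝ)).congr_of_eventuallyEq
        (Filter.Eventually.of_forall fun s => by ring)
    exact h1.sub h2
  have hBN : HasDerivAt
      (fun s => Ny x s * (x ^ 2 + (s + 1) ^ 2) - (k : ℝ) * N x s * (2 * (s + 1)))
      (Nyy x y * (x ^ 2 + (y + 1) ^ 2) + Ny x y * (2 * (y + 1))
        - (k : ℝ) * (Ny x y * (2 * (y + 1)) + N x y * 2)) y := by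
    have h1 := (hNyy x y).mul (hQy x y)
    have hb : HasDerivAt (fun s : ℝ => N x s * (2 * (s + 1)))
        (Ny x y * (2 * (y + 1)) + N x y * 2) y := by
      have h := (hNy x y).mul (((hasDerivAt_id y).add_const 1).const_mul 2)
      exact (h : HasDerivAt (fun s : ℝ => N x s * (2 * (s + 1))) _ y).congr_deriv (by simp)
    have h2 : HasDerivAt (fun s : ℝ => (k : ℝ) * N x s * (2 * (s + 1)))
        ((k : ℝ) * (Ny x y * (2 * (y + 1)) + N x y * 2)) y :=
      (hb.const_mul (k : ℝ)).congr_of_eventuallyEq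
        (Filter.Eventually.of_forall fun s => by ring)
    exact h1.sub h2
  have hy2 : deriv (fun y' => deriv (fun y'' => ((M x y'' / (x ^ 2 + (y'' + 1) ^ 2) ^ k,
        N x y'' / (x ^ 2 + (y'' + 1) ^ 2) ^ k) : ℝ × ℝ)) y') y
      = (((Myy x y * (x ^ 2 + (y + 1) ^ 2) + My x y * (2 * (y + 1))
            - (k : ℝ) * (My x y * (2 * (y + 1)) + M x y * 2)) * (x ^ 2 + (y + 1) ^ 2)
            - ((k + 1 : ℕ) : ℝ) * (My x y * (x ^ 2 + (y + 1) ^ 2)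
              - (k : ℝ) * M x y * (2 * (y + 1))) * (2 * (y + 1)))
            / (x ^ 2 + (y + 1) ^ 2) ^ (k + 2),
         ((Nyy x y * (x ^ 2 + (y + 1) ^ 2) + Ny x y * (2 * (y + 1))
            - (k : ℝ) * (Ny x y * (2 * (y + 1)) + N x y * 2)) * (x ^ 2 + (y + 1) ^ 2)
            - ((k + 1 : ℕ) : ℝ) * (Ny x y * (x ^ 2 + (y + 1) ^ 2)
              - (k : ℝ) * N x y * (2 * (y + 1))) * (2 * (y + 1)))
            / (x ^ 2 + (y + 1) ^ 2) ^ (k + 2)) := by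
    rw [hevy.deriv_eq]
    exact ((hasDerivAt_div_pow (k + 1) (Nat.le_add_left 1 k) hBM (hQy x y) (h0 x)).prodMk
      (hasDerivAt_div_pow (k + 1) (Nat.le_add_left 1 k) hBN (hQy x y) (h0 x))).deriv
  simp only [lap]
  rw [hx2, hy2, Prod.mk_add_mk, Prod.mk.injEq]
  constructor <;>
  · rw [← add_div]
    congr 1
    push_cast
    ring


/-- the maps `Z₁`, `Z₂`, `Z₃` are harmonic on the open upper half-plane. -/
theorem Z_harmonic :
    ∀ x y : ℝ, 0 < y →
      lap Z1 x y = 0 ∧ lap Z2 x y = 0 ∧ lap Z3 x y = 0 := by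
  intro x y hy
  refine ⟨?_, ?_, ?_⟩
  · -- Z1
    have e1 : Z1 = fun a b => ((1 - a ^ 2 - b ^ 2) / (a ^ 2 + (b + 1) ^ 2) ^ 1,
        2 * a / (a ^ 2 + (b + 1) ^ 2) ^ 1) := by
      funext a b; simp [Z1]
    have hMx : ∀ p q : ℝ, HasDerivAt (fun s : ℝ => 1 - s ^ 2 - q ^ 2) (-(2 * p)) p :=
      fun p q => hasDerivAt_of_poly3 (1 - q ^ 2) 0 (-1) 0 (fun s => by ring) (by ring)
    have hMxx : ∀ p q : ℝ, HasDerivAt (fun s : ℝ => -(2 * s)) (-2 : ℝ) p :=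
      fun p q => hasDerivAt_of_poly3 0 (-2) 0 0 (fun s => by ring) (by ring)
    have hMy : ∀ p q : ℝ, HasDerivAt (fun s : ℝ => 1 - p ^ 2 - s ^ 2) (-(2 * q)) q :=
      fun p q => hasDerivAt_of_poly3 (1 - p ^ 2) 0 (-1) 0 (fun s => by ring) (by ring)
    have hMyy : ∀ p q : ℝ, HasDerivAt (fun s : ℝ => -(2 * s)) (-2 : ℝ) q :=
      fun p q => hasDerivAt_of_poly3 0 (-2) 0 0 (fun s => by ring) (by ring)
    have hNx : ∀ p q : ℝ, HasDerivAt (fun s : ℝ => 2 * s) (2 : ℝ) p :=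
      fun p q => hasDerivAt_of_poly3 0 2 0 0 (fun s => by ring) (by ring)
    have hNxx : ∀ p q : ℝ, HasDerivAt (fun s : ℝ => (2 : ℝ)) (0 : ℝ) p :=
      fun p q => hasDerivAt_of_poly3 2 0 0 0 (fun s => by ring) (by ring)
    have hNy : ∀ p q : ℝ, HasDerivAt (fun s : ℝ => 2 * p) (0 : ℝ) q :=
      fun p q => hasDerivAt_of_poly3 (2 * p) 0 0 0 (fun s => by ring) (by ring)
    have hNyy : ∀ p q : ℝ, HasDerivAt (fun s : ℝ => (0 : ℝ)) (0 : ℝ) q :=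
      fun p q => hasDerivAt_of_poly3 0 0 0 0 (fun s => by ring) (by ring)
    rw [e1]
    refine (lap_div_pow 1 le_rfl _ _ _ _ _ _ _ _ _ _
      hMx hMxx hMy hMyy hNx hNxx hNy hNyy x y hy).trans ?_
    simp only [Prod.mk_eq_zero, div_eq_zero_iff]
    refine ⟨Or.inl ?_, Or.inl ?_⟩ <;> · push_cast; ring
  · -- Z2
    have e2 : Z2 = fun a b => ((2 * a ^ 2 - 2 * (b + 1) ^ 2) / (a ^ 2 + (b + 1) ^ 2) ^ 2,
        -(4 * a * (b + 1)) / (a ^ 2 + (b + 1) ^ 2) ^ 2) := by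
      funext a b; simp [Z2]
    have hMx : ∀ p q : ℝ, HasDerivAt (fun s : ℝ => 2 * s ^ 2 - 2 * (q + 1) ^ 2) (4 * p) p :=
      fun p q => hasDerivAt_of_poly3 (-(2 * (q + 1) ^ 2)) 0 2 0 (fun s => by ring) (by ring)
    have hMxx : ∀ p q : ℝ, HasDerivAt (fun s : ℝ => 4 * s) (4 : ℝ) p :=
      fun p q => hasDerivAt_of_poly3 0 4 0 0 (fun s => by ring) (by ring)
    have hMy : ∀ p q : ℝ, HasDerivAt (fun s : ℝ => 2 * p ^ 2 - 2 * (s + 1) ^ 2)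
        (-(4 * (q + 1))) q :=
      fun p q => hasDerivAt_of_poly3 (2 * p ^ 2 - 2) (-4) (-2) 0 (fun s => by ring) (by ring)
    have hMyy : ∀ p q : ℝ, HasDerivAt (fun s : ℝ => -(4 * (s + 1))) (-4 : ℝ) q :=
      fun p q => hasDerivAt_of_poly3 (-4) (-4) 0 0 (fun s => by ring) (by ring)
    have hNx : ∀ p q : ℝ, HasDerivAt (fun s : ℝ => -(4 * s * (q + 1))) (-(4 * (q + 1))) p :=
      fun p q => hasDerivAt_of_poly3 0 (-(4 * (q + 1))) 0 0 (fun s => by ring) (by ring)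
    have hNxx : ∀ p q : ℝ, HasDerivAt (fun s : ℝ => -(4 * (q + 1))) (0 : ℝ) p :=
      fun p q => hasDerivAt_of_poly3 (-(4 * (q + 1))) 0 0 0 (fun s => by ring) (by ring)
    have hNy : ∀ p q : ℝ, HasDerivAt (fun s : ℝ => -(4 * p * (s + 1))) (-(4 * p)) q :=
      fun p q => hasDerivAt_of_poly3 (-(4 * p)) (-(4 * p)) 0 0 (fun s => by ring) (by ring)
    have hNyy : ∀ p q : ℝ, HasDerivAt (fun s : ℝ => -(4 * p)) (0 : ℝ) q :=
      fun p q => hasDerivAt_of_poly3 (-(4 * p)) 0 0 0 (fun s => by ring) (by ring)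
    rw [e2]
    refine (lap_div_pow 2 (by norm_num) _ _ _ _ _ _ _ _ _ _
      hMx hMxx hMy hMyy hNx hNxx hNy hNyy x y hy).trans ?_
    simp only [Prod.mk_eq_zero, div_eq_zero_iff]
    refine ⟨Or.inl ?_, Or.inl ?_⟩ <;> · push_cast; ring
  · -- Z3
    have e3 : Z3 = fun a b => ((2 * a * (a ^ 2 + b ^ 2 - 1)) / (a ^ 2 + (b + 1) ^ 2) ^ 2,
        -(2 * b * (b + 1) ^ 2 + 2 * a ^ 2 * (2 + b)) / (a ^ 2 + (b + 1) ^ 2) ^ 2) := by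
      funext a b; simp [Z3]
    have hMx : ∀ p q : ℝ, HasDerivAt (fun s : ℝ => 2 * s * (s ^ 2 + q ^ 2 - 1))
        (6 * p ^ 2 + 2 * q ^ 2 - 2) p :=
      fun p q => hasDerivAt_of_poly3 0 (2 * q ^ 2 - 2) 0 2 (fun s => by ring) (by ring)
    have hMxx : ∀ p q : ℝ, HasDerivAt (fun s : ℝ => 6 * s ^ 2 + 2 * q ^ 2 - 2) (12 * p) p :=
      fun p q => hasDerivAt_of_poly3 (2 * q ^ 2 - 2) 0 6 0 (fun s => by ring) (by ring)
    have hMy : ∀ p q : ℝ, HasDerivAt (fun s : ℝ => 2 * p * (p ^ 2 + s ^ 2 - 1))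
        (4 * p * q) q :=
      fun p q => hasDerivAt_of_poly3 (2 * p * (p ^ 2 - 1)) 0 (2 * p) 0
        (fun s => by ring) (by ring)
    have hMyy : ∀ p q : ℝ, HasDerivAt (fun s : ℝ => 4 * p * s) (4 * p) q :=
      fun p q => hasDerivAt_of_poly3 0 (4 * p) 0 0 (fun s => by ring) (by ring)
    have hNx : ∀ p q : ℝ, HasDerivAt
        (fun s : ℝ => -(2 * q * (q + 1) ^ 2 + 2 * s ^ 2 * (2 + q)))
        (-(4 * p * (2 + q))) p :=
      fun p q => hasDerivAt_of_poly3 (-(2 * q * (q + 1) ^ 2)) 0 (-(2 * (2 + q))) 0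
        (fun s => by ring) (by ring)
    have hNxx : ∀ p q : ℝ, HasDerivAt (fun s : ℝ => -(4 * s * (2 + q)))
        (-(4 * (2 + q))) p :=
      fun p q => hasDerivAt_of_poly3 0 (-(4 * (2 + q))) 0 0 (fun s => by ring) (by ring)
    have hNy : ∀ p q : ℝ, HasDerivAt
        (fun s : ℝ => -(2 * s * (s + 1) ^ 2 + 2 * p ^ 2 * (2 + s)))
        (-(2 * (q + 1) ^ 2 + 4 * q * (q + 1) + 2 * p ^ 2)) q :=
      fun p q => hasDerivAt_of_poly3 (-(4 * p ^ 2)) (-(2 + 2 * p ^ 2)) (-4) (-2)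
        (fun s => by ring) (by ring)
    have hNyy : ∀ p q : ℝ, HasDerivAt
        (fun s : ℝ => -(2 * (s + 1) ^ 2 + 4 * s * (s + 1) + 2 * p ^ 2))
        (-(8 + 12 * q)) q :=
      fun p q => hasDerivAt_of_poly3 (-(2 + 2 * p ^ 2)) (-8) (-6) 0
        (fun s => by ring) (by ring)
    rw [e3]
    refine (lap_div_pow 2 (by norm_num) _ _ _ _ _ _ _ _ _ _
      hMx hMxx hMy hMyy hNx hNxx hNy hNyy x y hy).trans ?_
    simp only [Prod.mk_eq_zero, div_eq_zero_iff]
    refine ⟨Or.inl ?_, Or.inl ?_⟩ <;> · push_cast; ring
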